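/- For all complex numbers z₁,…,z_N and all integers k ≥ 1, R ≥ 1, the van der Corput-type inequality holds: |Σ_{n=1}^N z_n|² ≤ ((N + kR − k)/R) · Re( Σ_{n=1}^N |z_n|² + 2 Σ_{r=1}^{R−1} (1 − r/R) Σ_{n=1}^{N−kr} z_{n+kr} · conj(z_n) ). -/

import Mathlib

open Finset Complex

private lemma vdc_shift (f : ℕ → ℂ) (a b c : ℕ) :
    ∑ j ∈ Finset.Icc (a + c) (b + c), f j = ∑ m ∈ Finset.Icc a b, f (m + c) := by
  rw [← Finset.map_add_right_Icc, Finset.sum_map]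
  rfl

private lemma vdc_pairsum (ψ : ℕ → ℝ) (R : ℕ) :
    ∑ r ∈ Finset.range R, ∑ s ∈ Finset.range R, ψ (Nat.dist r s)
      = R * ψ 0 + 2 * ∑ d ∈ Finset.Icc 1 (R - 1), ((R : ℝ) - d) * ψ d := by
  induction R with
  | zero => simp
  | succ R ih =>
    have hE : ∑ s ∈ Finset.range R, ψ (R - s) = ∑ d ∈ Finset.Icc 1 R, ψ d := by
      apply Finset.sum_nbij' (i := fun s => R - s) (j := fun d => R - d)
      · intro a ha; simp only [Finset.mem_range] at ha; simp only [Finset.mem_Icc]; omega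
      · intro a ha; simp only [Finset.mem_Icc] at ha; simp only [Finset.mem_range]; omega
      · intro a ha; simp only [Finset.mem_range] at ha; omega
      · intro a ha; simp only [Finset.mem_Icc] at ha; omega
      · intro a _; rfl
    have hdist1 : ∀ s ∈ Finset.range R, ψ (Nat.dist R s) = ψ (R - s) := by
      intro s hs; simp only [Finset.mem_range] at hs
      congr 1; simp [Nat.dist]; omega
    have hdist2 : ∀ r ∈ Finset.range R, ψ (Nat.dist r R) = ψ (R - r) := by
      intro r hr; simp only [Finset.mem_range] at hr
      congr 1; simp [Nat.dist]; omega
    calc ∑ r ∈ Finset.range (R + 1), ∑ s ∈ Finset.range (R + 1), ψ (Nat.dist r s)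
        = (∑ r ∈ Finset.range R, (∑ s ∈ Finset.range R, ψ (Nat.dist r s) + ψ (Nat.dist r R)))
          + (∑ s ∈ Finset.range R, ψ (Nat.dist R s) + ψ (Nat.dist R R)) := by
          rw [Finset.sum_range_succ]
          congr 1
          · apply Finset.sum_congr rfl; intro r _; rw [Finset.sum_range_succ]
          · rw [Finset.sum_range_succ]
      _ = (∑ r ∈ Finset.range R, ∑ s ∈ Finset.range R, ψ (Nat.dist r s))
          + ψ 0 + 2 * ∑ d ∈ Finset.Icc 1 R, ψ d := by
          rw [Finset.sum_add_distrib, Finset.sum_congr rfl hdist1, Finset.sum_congr rfl hdist2,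
            hE]
          have : Nat.dist R R = 0 := by simp [Nat.dist]
          rw [this]; ring
      _ = (R : ℝ) * ψ 0 + 2 * ∑ d ∈ Finset.Icc 1 (R - 1), ((R : ℝ) - d) * ψ d
          + ψ 0 + 2 * ∑ d ∈ Finset.Icc 1 R, ψ d := by rw [ih]
      _ = (↑(R + 1) : ℝ) * ψ 0 + 2 * ∑ d ∈ Finset.Icc 1 (R + 1 - 1), ((↑(R + 1) : ℝ) - d) * ψ d := by
          have htop : ∑ d ∈ Finset.Icc 1 R, ((R : ℝ) - d) * ψ d
              = ∑ d ∈ Finset.Icc 1 (R - 1), ((R : ℝ) - d) * ψ d := by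
            rcases Nat.eq_zero_or_pos R with h0 | hpos
            · subst h0; rfl
            · have hRe : R = (R - 1) + 1 := by omega
              rw [hRe, Finset.sum_Icc_succ_top (by omega)]
              have : ((((R : ℕ) - 1 : ℕ) + 1 : ℕ) : ℝ) - (((R - 1 : ℕ) + 1 : ℕ) : ℝ) = 0 := by ring
              rw [this, zero_mul, add_zero]
              congr 1 <;> omega
          have hsplit : ∑ d ∈ Finset.Icc 1 (R + 1 - 1), ((↑(R + 1) : ℝ) - d) * ψ d
              = ∑ d ∈ Finset.Icc 1 R, (((R : ℝ) - d) * ψ d + ψ d) := by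
            apply Finset.sum_congr (by congr 1)
            intro d _; push_cast; ring
          rw [hsplit, Finset.sum_add_distrib, htop]
          push_cast; ring

theorem stmt17 (N k R : ℕ) (hk : 1 ≤ k) (hR : 1 ≤ R) (z : ℕ → ℂ) :
    ‖∑ n ∈ Finset.Icc 1 N, z n‖ ^ 2 ≤
      (((N : ℝ) + k * R - k) / R) *
        (∑ n ∈ Finset.Icc 1 N, ‖z n‖ ^ 2 +
          2 * ∑ r ∈ Finset.Icc 1 (R - 1), (1 - (r : ℝ) / R) *
            (∑ n ∈ Finset.Icc 1 (N - k * r), z (n + k * r) * (starRingEnd ℂ) (z n)).re) := by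
  set S : ℂ := ∑ n ∈ Finset.Icc 1 N, z n with hS
  set K := k * (R - 1) with hKdef
  set M := N + K with hMdef
  set w : ℕ → ℂ := fun m => if m ∈ Finset.Icc (K + 1) (K + N) then z (m - K) else 0 with hw
  set ψ : ℕ → ℝ :=
    fun d => (∑ n ∈ Finset.Icc 1 (N - k * d), z (n + k * d) * (starRingEnd ℂ) (z n)).re with hψ
  have hsupp : ∀ j, j ∉ Finset.Icc (K + 1) (K + N) → w j = 0 := by
    intro j hj; simp only [hw, if_neg hj]
  have hcore : ∑ j ∈ Finset.Icc (K + 1) (K + N), w j = S := by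
    have e : Finset.Icc (K + 1) (K + N) = Finset.Icc (1 + K) (N + K) := by
      congr 1 <;> omega
    rw [e, vdc_shift]
    apply Finset.sum_congr rfl
    intro n hn
    rw [Finset.mem_Icc] at hn
    have hmem : n + K ∈ Finset.Icc (K + 1) (K + N) := by
      rw [Finset.mem_Icc]; omega
    simp only [hw, if_pos hmem, Nat.add_sub_cancel]
  have hA : ∀ c ≤ K, ∑ m ∈ Finset.Icc 1 M, w (m + c) = S := by
    intro c hc
    rw [← vdc_shift]
    rw [← hcore]
    apply (Finset.sum_subset ?_ ?_).symm
    · intro j hj; rw [Finset.mem_Icc] at *; omega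
    · intro j _ hj; exact hsupp j hj
  have hB : ∀ c ≤ K, ∀ d : ℕ,
      ∑ m ∈ Finset.Icc 1 M, w (m + k * d + c) * (starRingEnd ℂ) (w (m + c))
        = ∑ n ∈ Finset.Icc 1 (N - k * d), z (n + k * d) * (starRingEnd ℂ) (z n) := by
    intro c hc d
    have step1 : ∑ m ∈ Finset.Icc 1 M, w (m + k * d + c) * (starRingEnd ℂ) (w (m + c))
        = ∑ j ∈ Finset.Icc (1 + c) (M + c), w (j + k * d) * (starRingEnd ℂ) (w j) := by
      rw [vdc_shift (fun j => w (j + k * d) * (starRingEnd ℂ) (w j))]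
      apply Finset.sum_congr rfl
      intro m _
      congr 2
      omega
    have step2 : ∑ j ∈ Finset.Icc (1 + c) (M + c), w (j + k * d) * (starRingEnd ℂ) (w j)
        = ∑ j ∈ Finset.Icc (K + 1) (K + N), w (j + k * d) * (starRingEnd ℂ) (w j) := by
      apply (Finset.sum_subset ?_ ?_).symm
      · intro j hj; rw [Finset.mem_Icc] at *; omega
      · intro j _ hj; rw [hsupp j hj]; simp
    have e : Finset.Icc (K + 1) (K + N) = Finset.Icc (1 + K) (N + K) := by congr 1 <;> omega
    have step3 : ∑ j ∈ Finset.Icc (K + 1) (K + N), w (j + k * d) * (starRingEnd ℂ) (w j)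
        = ∑ n ∈ Finset.Icc 1 N,
            (if n + k * d ≤ N then z (n + k * d) else 0) * (starRingEnd ℂ) (z n) := by
      rw [e, vdc_shift (fun j => w (j + k * d) * (starRingEnd ℂ) (w j))]
      apply Finset.sum_congr rfl
      intro n hn
      rw [Finset.mem_Icc] at hn
      have hmem : n + K ∈ Finset.Icc (K + 1) (K + N) := by rw [Finset.mem_Icc]; omega
      have e2 : n + K + k * d = (n + k * d) + K := by ring
      simp only [e2, hw, if_pos hmem, Nat.add_sub_cancel]
      congr 1
      by_cases h : n + k * d ≤ N
      · have : (n + k * d) + K ∈ Finset.Icc (K + 1) (K + N) := by rw [Finset.mem_Icc]; omega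
        rw [if_pos this, if_pos h]
      · have : (n + k * d) + K ∉ Finset.Icc (K + 1) (K + N) := by rw [Finset.mem_Icc]; omega
        rw [if_neg this, if_neg h]
    have step4 : ∑ n ∈ Finset.Icc 1 N,
          (if n + k * d ≤ N then z (n + k * d) else 0) * (starRingEnd ℂ) (z n)
        = ∑ n ∈ Finset.Icc 1 (N - k * d), z (n + k * d) * (starRingEnd ℂ) (z n) := by
      symm
      have hsub : Finset.Icc 1 (N - k * d) ⊆ Finset.Icc 1 N :=
        Finset.Icc_subset_Icc le_rfl (by omega)
      rw [show (∑ n ∈ Finset.Icc 1 (N - k * d), z (n + k * d) * (starRingEnd ℂ) (z n))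
          = ∑ n ∈ Finset.Icc 1 (N - k * d),
              (if n + k * d ≤ N then z (n + k * d) else 0) * (starRingEnd ℂ) (z n) from ?_]
      · apply Finset.sum_subset hsub
        intro n hn hn'
        rw [Finset.mem_Icc] at hn hn'
        rw [if_neg (by omega), zero_mul]
      · apply Finset.sum_congr rfl
        intro n hn
        rw [Finset.mem_Icc] at hn
        rw [if_pos (by omega)]
    rw [step1, step2, step3, step4]
  -- the averaged function
  set F : ℕ → ℂ := fun m => ∑ r ∈ Finset.range R, w (m + k * r) with hF
  have hsum_F : ∑ m ∈ Finset.Icc 1 M, F m = (R : ℂ) * S := by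
    rw [hF, Finset.sum_comm]
    have : ∀ r ∈ Finset.range R, ∑ m ∈ Finset.Icc 1 M, w (m + k * r) = S := by
      intro r hr
      rw [Finset.mem_range] at hr
      exact hA (k * r) (Nat.mul_le_mul_left k (by omega))
    rw [Finset.sum_congr rfl this, Finset.sum_const, Finset.card_range, nsmul_eq_mul]
  have hT : ∀ r < R, ∀ s < R,
      (∑ m ∈ Finset.Icc 1 M, w (m + k * r) * (starRingEnd ℂ) (w (m + k * s))).re
        = ψ (Nat.dist r s) := by
    have hge : ∀ r s : ℕ, s ≤ r → r < R →
        (∑ m ∈ Finset.Icc 1 M, w (m + k * r) * (starRingEnd ℂ) (w (m + k * s))).re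
          = ψ (r - s) := by
      intro r s hsr hrR
      have e : ∀ m : ℕ, m + k * r = m + k * (r - s) + k * s := by
        intro m
        have : k * (r - s) + k * s = k * r := by
          rw [← Nat.mul_add, Nat.sub_add_cancel hsr]
        omega
      have := hB (k * s) (Nat.mul_le_mul_left k (by omega)) (r - s)
      rw [show (∑ m ∈ Finset.Icc 1 M, w (m + k * r) * (starRingEnd ℂ) (w (m + k * s)))
          = ∑ m ∈ Finset.Icc 1 M, w (m + k * (r - s) + k * s) * (starRingEnd ℂ) (w (m + k * s))
          from Finset.sum_congr rfl (fun m _ => by rw [← e m]), this]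
    intro r hr s hs
    rcases le_total s r with h | h
    · rw [hge r s h hr]
      congr 1
      simp [Nat.dist]; omega
    · have hconj : (∑ m ∈ Finset.Icc 1 M, w (m + k * r) * (starRingEnd ℂ) (w (m + k * s)))
          = (starRingEnd ℂ)
              (∑ m ∈ Finset.Icc 1 M, w (m + k * s) * (starRingEnd ℂ) (w (m + k * r))) := by
        rw [map_sum]
        apply Finset.sum_congr rfl
        intro m _
        rw [map_mul, RingHomCompTriple.comp_apply]
        ring_nf
        simp [mul_comm]
      rw [hconj, Complex.conj_re, hge s r h hs]
      congr 1
      simp [Nat.dist]; omega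
  have habs : ∀ m, ‖F m‖ ^ 2
      = ∑ r ∈ Finset.range R, ∑ s ∈ Finset.range R,
          (w (m + k * r) * (starRingEnd ℂ) (w (m + k * s))).re := by
    intro m
    have : ‖F m‖ ^ 2 = (F m * (starRingEnd ℂ) (F m)).re := by
      rw [Complex.mul_conj, Complex.sq_norm]
      simp
    rw [this, hF]
    rw [map_sum, Finset.sum_mul_sum, Complex.re_sum]
    apply Finset.sum_congr rfl
    intro r _
    rw [Complex.re_sum]
  have hcard : (Finset.Icc 1 M).card = M := by rw [Nat.card_Icc]; omega
  -- Cauchy-Schwarz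
  have hCS : ((R : ℝ) * ‖S‖) ^ 2
      ≤ (M : ℝ) * ∑ m ∈ Finset.Icc 1 M, ‖F m‖ ^ 2 := by
    have h1 : (R : ℝ) * ‖S‖ = ‖(R : ℂ) * S‖ := by
      rw [norm_mul]; simp
    have h2 : ‖(R : ℂ) * S‖ ≤ ∑ m ∈ Finset.Icc 1 M, ‖F m‖ := by
      rw [← hsum_F]
      simpa using norm_sum_le (Finset.Icc 1 M) F
    have h3 : (∑ m ∈ Finset.Icc 1 M, ‖F m‖) ^ 2
        ≤ (M : ℝ) * ∑ m ∈ Finset.Icc 1 M, ‖F m‖ ^ 2 := by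
      have := sq_sum_le_card_mul_sum_sq (s := Finset.Icc 1 M) (f := fun m => ‖F m‖)
      rwa [hcard] at this
    calc ((R : ℝ) * ‖S‖) ^ 2 ≤ (∑ m ∈ Finset.Icc 1 M, ‖F m‖) ^ 2 := by
          apply pow_le_pow_left₀ (by rw [h1]; positivity)
          rw [h1]; exact h2
      _ ≤ _ := h3
  -- expand the sum of squares
  have hexp : ∑ m ∈ Finset.Icc 1 M, ‖F m‖ ^ 2
      = (R : ℝ) * ψ 0 + 2 * ∑ d ∈ Finset.Icc 1 (R - 1), ((R : ℝ) - d) * ψ d := by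
    rw [Finset.sum_congr rfl (fun m _ => habs m)]
    rw [Finset.sum_comm]
    have : ∀ r ∈ Finset.range R, ∑ m ∈ Finset.Icc 1 M,
        ∑ s ∈ Finset.range R, (w (m + k * r) * (starRingEnd ℂ) (w (m + k * s))).re
        = ∑ s ∈ Finset.range R, ψ (Nat.dist r s) := by
      intro r hr
      rw [Finset.mem_range] at hr
      rw [Finset.sum_comm]
      apply Finset.sum_congr rfl
      intro s hs
      rw [Finset.mem_range] at hs
      rw [← Complex.re_sum]
      exact hT r hr s hs
    rw [Finset.sum_congr rfl this, vdc_pairsum]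
  have hψ0 : ψ 0 = ∑ n ∈ Finset.Icc 1 N, ‖z n‖ ^ 2 := by
    simp only [hψ, Nat.mul_zero, Nat.sub_zero, Nat.add_zero, Complex.re_sum]
    apply Finset.sum_congr rfl
    intro n _
    rw [Complex.mul_conj, Complex.sq_norm]
    simp
  -- final algebra
  have hRpos : (0 : ℝ) < R := by exact_mod_cast hR
  have hMcast : ((N : ℝ) + k * R - k) = (M : ℝ) := by
    rw [hMdef, hKdef]
    push_cast [Nat.cast_sub hR]
    ring
  have key : (R : ℝ) ^ 2 * ‖S‖ ^ 2
      ≤ (M : ℝ) * ((R : ℝ) * ψ 0 + 2 * ∑ d ∈ Finset.Icc 1 (R - 1), ((R : ℝ) - d) * ψ d) := by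
    rw [← hexp]
    calc (R : ℝ) ^ 2 * ‖S‖ ^ 2 = ((R : ℝ) * ‖S‖) ^ 2 := by ring
      _ ≤ _ := hCS
  have hsum_coeff : ∑ d ∈ Finset.Icc 1 (R - 1), ((R : ℝ) - d) * ψ d
      = (R : ℝ) * ∑ d ∈ Finset.Icc 1 (R - 1), (1 - (d : ℝ) / R) * ψ d := by
    rw [Finset.mul_sum]
    apply Finset.sum_congr rfl
    intro d _
    have h : (R : ℝ) * (1 - (d : ℝ) / R) = (R : ℝ) - d := by field_simp
    rw [← h]; ring
  rw [hMcast]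
  have hre : ∀ r : ℕ,
      (∑ n ∈ Finset.Icc 1 (N - k * r), z (n + k * r) * (starRingEnd ℂ) (z n)).re = ψ r :=
    fun r => rfl
  simp only [hre, ← hψ0]
  have hgoal_eq : (M : ℝ) / R *
      (ψ 0 + 2 * ∑ r ∈ Finset.Icc 1 (R - 1), (1 - (r : ℝ) / R) * ψ r)
      = ((M : ℝ) * ((R : ℝ) * ψ 0
          + 2 * ∑ d ∈ Finset.Icc 1 (R - 1), ((R : ℝ) - d) * ψ d)) / (R : ℝ) ^ 2 := by
    rw [hsum_coeff, div_mul_eq_mul_div,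
      div_eq_div_iff (ne_of_gt hRpos) (ne_of_gt (pow_pos hRpos 2))]
    ring
  rw [hgoal_eq, le_div_iff₀ (by positivity)]
  calc ‖S‖ ^ 2 * (R : ℝ) ^ 2 = (R : ℝ) ^ 2 * ‖S‖ ^ 2 := by ring
    _ ≤ _ := key
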